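/- arXiv:1512.07023 — 3 statements merged into one kernel-verified Lean document; each statement's English description precedes it below -/
import Mathlib

section
/- (Poincaré with small jump set) There exists a constant $c>0$ depending only on $p\in(1,\infty)$ such that for every $\rho>0$ and every $u\in SBV^p(Q_\rho)$, $Q_\rho=(-\rho,\rho)^2$, with all jumps having normal $e_2$ and with $\mathcal{H}^1(J_u\cap Q_\rho)\le\rho$, there exists $\bar u\in\mathbb{R}$ with $\|u-\bar u\|_{L^p(Q_\rho)}\le c\,\rho\,\|\nabla u\|_{L^p(Q_\rho)}$. -/
open MeasureTheory Set Filter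
open scoped ENNReal Topology

private lemma uIoc_subset_Ioo' {a b l r : ℝ} (ha : a ∈ Set.Ioo l r) (hb : b ∈ Set.Ioo l r) :
    Set.uIoc a b ⊆ Set.Ioo l r := by
  intro t ht
  rw [Set.mem_uIoc] at ht
  obtain ⟨h1, h2⟩ | ⟨h1, h2⟩ := ht
  · exact ⟨lt_trans ha.1 h1, lt_of_le_of_lt h2 hb.2⟩
  · exact ⟨lt_trans hb.1 h1, lt_of_le_of_lt h2 ha.2⟩

private lemma ofReal_intervalIntegral_le {f : ℝ → ℝ} {a b l r : ℝ}
    (ha : a ∈ Set.Ioo l r) (hb : b ∈ Set.Ioo l r) :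
    ENNReal.ofReal |∫ s in a..b, f s| ≤ ∫⁻ s in Set.Ioo l r, ENNReal.ofReal |f s| := by
  rw [intervalIntegral.abs_intervalIntegral_eq]
  calc ENNReal.ofReal |∫ s in Set.uIoc a b, f s|
      = (‖∫ s in Set.uIoc a b, f s‖₊ : ℝ≥0∞) := by
        rw [← Real.norm_eq_abs]; exact ofReal_norm_eq_enorm _
    _ ≤ ∫⁻ s in Set.uIoc a b, (‖f s‖₊ : ℝ≥0∞) := enorm_integral_le_lintegral_enorm _
    _ = ∫⁻ s in Set.uIoc a b, ENNReal.ofReal |f s| := by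
        exact lintegral_congr fun s => by rw [← Real.norm_eq_abs]; exact (ofReal_norm_eq_enorm _).symm
    _ ≤ ∫⁻ s in Set.Ioo l r, ENNReal.ofReal |f s| :=
        lintegral_mono_set (uIoc_subset_Ioo' ha hb)

private lemma pow_lintegral_le {p q : ℝ} (hpq : Real.HolderConjugate p q) (μ : Measure ℝ)
    (f : ℝ → ℝ≥0∞) (hf : AEMeasurable f μ) :
    (∫⁻ s, f s ∂μ) ^ p ≤ (∫⁻ s, f s ^ p ∂μ) * (μ Set.univ) ^ (p - 1) := by
  have h := ENNReal.lintegral_mul_le_Lp_mul_Lq μ hpq hf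
    (aemeasurable_const (b := (1 : ℝ≥0∞)))
  simp only [Pi.mul_apply, mul_one, ENNReal.one_rpow, lintegral_one] at h
  have h2 := ENNReal.rpow_le_rpow h hpq.nonneg
  calc (∫⁻ s, f s ∂μ) ^ p
      ≤ ((∫⁻ s, f s ^ p ∂μ) ^ (1 / p) * (μ Set.univ) ^ (1 / q)) ^ p := h2
    _ = (∫⁻ s, f s ^ p ∂μ) * (μ Set.univ) ^ (p - 1) := by
        rw [ENNReal.mul_rpow_of_nonneg _ _ hpq.nonneg, ← ENNReal.rpow_mul, ← ENNReal.rpow_mul]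
        congr 1
        · rw [one_div, inv_mul_cancel₀ hpq.ne_zero, ENNReal.rpow_one]
        · congr 1
          have hp0 : p ≠ 0 := hpq.ne_zero
          have hp1 : p - 1 ≠ 0 := hpq.sub_one_ne_zero
          rw [hpq.conjugate_eq]
          field_simp

private lemma lint_prod_eq (f : ℝ × ℝ → ℝ≥0∞) (hf : Measurable f) (s t : Set ℝ) :
    ∫⁻ x in s ×ˢ t, f x = ∫⁻ x₁ in s, ∫⁻ x₂ in t, f (x₁, x₂) := by
  rw [Measure.volume_eq_prod, ← Measure.prod_restrict]
  exact lintegral_prod f hf.aemeasurable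

private lemma lint_prod_eq_symm (f : ℝ × ℝ → ℝ≥0∞) (hf : Measurable f) (s t : Set ℝ) :
    ∫⁻ x in s ×ˢ t, f x = ∫⁻ x₂ in t, ∫⁻ x₁ in s, f (x₁, x₂) := by
  rw [Measure.volume_eq_prod, ← Measure.prod_restrict]
  exact lintegral_prod_symm f hf.aemeasurable

/-- Poincaré with small jump set: there exists `c > 0` depending only on
`p ∈ (1,∞)` such that for every `ρ > 0` and every `u ∈ SBV^p(Q_ρ)` with jump set `J` of
normal `e₂` and `ℋ¹(J ∩ Q_ρ) ≤ ρ`, there is `ū ∈ ℝ` with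
`‖u - ū‖_{L^p(Q_ρ)} ≤ c ρ ‖∇u‖_{L^p(Q_ρ)}`.
The `SBV^p` structure with horizontal jumps is encoded through: the fundamental theorem
of calculus on a.e. horizontal slice (with derivative `g.1`); the fundamental theorem of
calculus on a.e. vertical slice avoiding `J` (with derivative `g.2`); and the fact that
the set of vertical lines meeting `J ∩ Q_ρ` has measure at most `ℋ¹(J ∩ Q_ρ)` (true for
jump sets with normal `e₂`). -/
theorem stmt4 (p : ℝ) (hp : 1 < p) :
    ∃ c : ℝ, 0 < c ∧
      ∀ (ρ : ℝ), 0 < ρ →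
      ∀ (u : ℝ × ℝ → ℝ) (g : ℝ × ℝ → ℝ × ℝ) (J : Set (ℝ × ℝ)),
      Measurable u → Measurable g →
      μH[1] (J ∩ (Set.Ioo (-ρ) ρ ×ˢ Set.Ioo (-ρ) ρ)) ≤ ENNReal.ofReal ρ →
      (volume {x₁ : ℝ | x₁ ∈ Set.Ioo (-ρ) ρ ∧
          ∃ x₂, (x₁, x₂) ∈ J ∩ (Set.Ioo (-ρ) ρ ×ˢ Set.Ioo (-ρ) ρ)}
        ≤ μH[1] (J ∩ (Set.Ioo (-ρ) ρ ×ˢ Set.Ioo (-ρ) ρ))) →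
      (∀ᵐ x₂ ∂(volume : Measure ℝ), x₂ ∈ Set.Ioo (-ρ) ρ →
        ∀ s₁ ∈ Set.Icc (-ρ) ρ, ∀ s₂ ∈ Set.Icc (-ρ) ρ,
          u (s₂, x₂) - u (s₁, x₂) = ∫ s in s₁..s₂, (g (s, x₂)).1) →
      (∀ᵐ x₁ ∂(volume : Measure ℝ), x₁ ∈ Set.Ioo (-ρ) ρ →
        (∀ s ∈ Set.Ioo (-ρ) ρ, (x₁, s) ∉ J) →
        ∀ s₁ ∈ Set.Icc (-ρ) ρ, ∀ s₂ ∈ Set.Icc (-ρ) ρ,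
          u (x₁, s₂) - u (x₁, s₁) = ∫ s in s₁..s₂, (g (x₁, s)).2) →
      ∃ ubar : ℝ,
        ∫⁻ x in (Set.Ioo (-ρ) ρ ×ˢ Set.Ioo (-ρ) ρ),
            ENNReal.ofReal (|u x - ubar| ^ p)
          ≤ ENNReal.ofReal ((c * ρ) ^ p) *
            ∫⁻ x in (Set.Ioo (-ρ) ρ ×ˢ Set.Ioo (-ρ) ρ),
              ENNReal.ofReal (‖g x‖ ^ p) := by
  obtain ⟨q, hpq⟩ : ∃ q, Real.HolderConjugate p q :=
    ⟨_, Real.HolderConjugate.conjExponent hp⟩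
  have hp0 : (0:ℝ) ≤ p := hpq.nonneg
  refine ⟨36, by norm_num, ?_⟩
  intro ρ hρ u g J hu hg hμJ hproj hhor hvert
  set I : Set ℝ := Set.Ioo (-ρ) ρ with hIdef
  have hIm : MeasurableSet I := measurableSet_Ioo
  set r : ℝ≥0∞ := ENNReal.ofReal ρ with hrdef
  set R : ℝ≥0∞ := ENNReal.ofReal (2 * ρ) with hRdef
  have hIvol : volume I = R := by
    rw [hIdef, Real.volume_Ioo, hRdef]; congr 1; ring
  have hR2 : R = 2 * r := by
    rw [hRdef, hrdef, ENNReal.ofReal_mul (by norm_num : (0:ℝ) ≤ 2)]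
    norm_num
  have hR0 : R ≠ 0 := by
    rw [hRdef]
    simp only [ne_eq, ENNReal.ofReal_eq_zero, not_le]
    positivity
  have hRt : R ≠ ⊤ := ENNReal.ofReal_ne_top
  set I2 : ℝ≥0∞ := ∫⁻ x in I ×ˢ I, ENNReal.ofReal (‖g x‖ ^ p) with hI2def
  have hc0 : ENNReal.ofReal ((36 * ρ) ^ p) ≠ 0 :=
    (ENNReal.ofReal_pos.mpr (Real.rpow_pos_of_pos (by linarith) p)).ne'
  by_cases hI2top : I2 = ⊤
  · exact ⟨0, by rw [hI2top, ENNReal.mul_top hc0]; exact le_top⟩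
  -- measurability facts
  have hmg2 : Measurable fun z : ℝ × ℝ => ENNReal.ofReal (|(g z).2| ^ p) := by fun_prop
  have hmg1p : Measurable fun z : ℝ × ℝ => ENNReal.ofReal (|(g z).1| ^ p) := by fun_prop
  have hmgn : Measurable fun z : ℝ × ℝ => ENNReal.ofReal (‖g z‖ ^ p) := by fun_prop
  set K : ℝ → ℝ≥0∞ := fun x₁ => ∫⁻ s in I, ENNReal.ofReal (|(g (x₁, s)).2| ^ p) with hKdef
  have hKm : Measurable K := by
    simp only [hKdef]
    exact Measurable.lintegral_prod_right'
      (f := fun z : ℝ × ℝ => ENNReal.ofReal (|(g z).2| ^ p)) hmg2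
  have hSI : ∫⁻ x₁ in I, K x₁ ≤ I2 := by
    rw [hI2def, lint_prod_eq _ hmgn]
    simp only [hKdef]
    refine lintegral_mono fun x₁ => lintegral_mono fun s => ?_
    refine ENNReal.ofReal_le_ofReal (Real.rpow_le_rpow (abs_nonneg _) ?_ hp0)
    rw [← Real.norm_eq_abs]; exact norm_snd_le _
  set A : Set ℝ := {x₁ | x₁ ∈ I ∧ 2 * I2 < r * K x₁} with hAdef
  have hAvol : volume A ≤ r / 2 := by
    by_cases hI20 : I2 = 0
    · have hS0 : ∫⁻ x₁ in I, K x₁ = 0 :=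
        le_antisymm (hI20 ▸ hSI) zero_le
      have hK0 : ∀ᵐ x₁ ∂(volume.restrict I), K x₁ = 0 :=
        (lintegral_eq_zero_iff hKm).mp hS0
      have hmeas : MeasurableSet {x₁ : ℝ | ¬ K x₁ = 0} :=
        (hKm (measurableSet_singleton 0)).compl
      have hsub : A ⊆ {x₁ : ℝ | ¬ K x₁ = 0} ∩ I := by
        rintro x₁ ⟨hxI, hlt⟩
        refine ⟨fun h0 => ?_, hxI⟩
        rw [hI20, h0, mul_zero, mul_zero] at hlt
        exact lt_irrefl _ hlt
      calc volume A ≤ volume ({x₁ : ℝ | ¬ K x₁ = 0} ∩ I) := measure_mono hsub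
        _ = (volume.restrict I) {x₁ : ℝ | ¬ K x₁ = 0} := (Measure.restrict_apply hmeas).symm
        _ = 0 := ae_iff.mp hK0
        _ ≤ r / 2 := zero_le
    · have h2I2ne0 : (2 : ℝ≥0∞) * I2 ≠ 0 := mul_ne_zero (by norm_num) hI20
      have h2I2net : (2 : ℝ≥0∞) * I2 ≠ ⊤ := ENNReal.mul_ne_top (by norm_num) hI2top
      have hmarkov := mul_meas_ge_le_lintegral₀ (μ := volume.restrict I)
        (f := fun x₁ => r * K x₁) ((hKm.const_mul r).aemeasurable) (2 * I2)
      have hlin : ∫⁻ x₁ in I, r * K x₁ = r * ∫⁻ x₁ in I, K x₁ :=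
        lintegral_const_mul' r K ENNReal.ofReal_ne_top
      have h1 : (2 * I2) * (volume.restrict I) {x₁ | 2 * I2 ≤ r * K x₁}
          ≤ (2 * I2) * (r / 2) := by
        calc (2 * I2) * (volume.restrict I) {x₁ | 2 * I2 ≤ r * K x₁}
            ≤ ∫⁻ x₁ in I, r * K x₁ := hmarkov
          _ = r * ∫⁻ x₁ in I, K x₁ := hlin
          _ ≤ r * I2 := mul_le_mul_right hSI r
          _ = (2 * I2) * (r / 2) := by
              rw [show (2:ℝ≥0∞) * I2 * (r / 2) = I2 * (2 * (r / 2)) by ring,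
                ENNReal.mul_div_cancel' (by norm_num) (by norm_num)]
              ring
      have h2 : (volume.restrict I) {x₁ | 2 * I2 ≤ r * K x₁} ≤ r / 2 :=
        (ENNReal.mul_le_mul_iff_right h2I2ne0 h2I2net).mp h1
      have hmeas2 : MeasurableSet {x₁ : ℝ | 2 * I2 ≤ r * K x₁} :=
        measurableSet_le measurable_const (hKm.const_mul r)
      calc volume A ≤ volume ({x₁ : ℝ | 2 * I2 ≤ r * K x₁} ∩ I) :=
            measure_mono (fun x hx => ⟨le_of_lt hx.2, hx.1⟩)
        _ = (volume.restrict I) {x₁ : ℝ | 2 * I2 ≤ r * K x₁} :=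
            (Measure.restrict_apply hmeas2).symm
        _ ≤ r / 2 := h2
  set B : Set ℝ := {x₁ | x₁ ∈ I ∧ ∃ x₂, (x₁, x₂) ∈ J ∩ (I ×ˢ I)} with hBdef
  have hBvol : volume B ≤ r := le_trans hproj hμJ
  set P : ℝ → Prop := fun x₁ => x₁ ∈ I → (∀ s ∈ I, (x₁, s) ∉ J) →
    ∀ s₁ ∈ Set.Icc (-ρ) ρ, ∀ s₂ ∈ Set.Icc (-ρ) ρ,
      u (x₁, s₂) - u (x₁, s₁) = ∫ s in s₁..s₂, (g (x₁, s)).2 with hPdef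
  have hvert' : ∀ᵐ x₁ ∂(volume : Measure ℝ), P x₁ := hvert
  have hNvol : volume {x₁ : ℝ | ¬ P x₁} = 0 := ae_iff.mp hvert'
  have hgood : ∃ a, a ∈ I ∧ a ∉ B ∧ ¬ (2 * I2 < r * K a) ∧ P a := by
    by_contra hcon
    push_neg at hcon
    have hsub : I ⊆ (B ∪ A) ∪ {x₁ : ℝ | ¬ P x₁} := by
      intro x hx
      by_cases h1 : x ∈ B
      · exact Set.mem_union_left _ (Set.mem_union_left _ h1)
      by_cases h2 : 2 * I2 < r * K x
      · refine Set.mem_union_left _ (Set.mem_union_right _ ?_)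
        show x ∈ I ∧ 2 * I2 < r * K x
        exact ⟨hx, h2⟩
      · refine Set.mem_union_right _ ?_
        show ¬ P x
        exact hcon x hx h1 (not_lt.mp h2)
    have hle : volume I ≤ r + r / 2 := by
      calc volume I ≤ volume ((B ∪ A) ∪ {x₁ : ℝ | ¬ P x₁}) := measure_mono hsub
        _ ≤ volume (B ∪ A) + volume {x₁ : ℝ | ¬ P x₁} := measure_union_le _ _
        _ ≤ (volume B + volume A) + 0 := by
            rw [hNvol]; exact add_le_add_left (measure_union_le _ _) 0
        _ ≤ (r + r / 2) + 0 := by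
            exact add_le_add_left (add_le_add hBvol hAvol) 0
        _ = r + r / 2 := by rw [add_zero]
    rw [hIvol] at hle
    have hr2 : r / 2 = ENNReal.ofReal (ρ / 2) := by
      rw [hrdef, ENNReal.ofReal_div_of_pos (by norm_num : (0:ℝ) < 2)]
      norm_num
    rw [hrdef, hRdef, hr2, ← ENNReal.ofReal_add hρ.le (by positivity)] at hle
    rw [ENNReal.ofReal_le_ofReal_iff (by positivity)] at hle
    linarith
  obtain ⟨a, haI, haB, haK', haP⟩ := hgood
  have haK : r * K a ≤ 2 * I2 := not_lt.mp haK'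
  have haJ : ∀ s ∈ I, (a, s) ∉ J := by
    intro s hs hJs
    exact haB ⟨haI, s, hJs, haI, hs⟩
  have hFTCv := haP haI haJ
  have h0I : (0:ℝ) ∈ Set.Icc (-ρ) ρ := ⟨by linarith, by linarith⟩
  have h0mem : (0:ℝ) ∈ I := ⟨by simpa using hρ, hρ⟩
  have hIccsub : I ⊆ Set.Icc (-ρ) ρ := Set.Ioo_subset_Icc_self
  set Bt : ℝ≥0∞ := ∫⁻ s in I, ENNReal.ofReal |(g (a, s)).2| with hBtdef
  have hBt : Bt ^ p ≤ K a * R ^ (p - 1) := by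
    have h := pow_lintegral_le hpq (volume.restrict I)
      (fun s => ENNReal.ofReal |(g (a, s)).2|) (by fun_prop)
    rw [Measure.restrict_apply_univ, hIvol] at h
    calc Bt ^ p ≤ (∫⁻ s in I, (ENNReal.ofReal |(g (a, s)).2|) ^ p) * R ^ (p - 1) := h
      _ = K a * R ^ (p - 1) := by
          congr 1
          simp only [hKdef]
          exact lintegral_congr fun s =>
            ENNReal.ofReal_rpow_of_nonneg (abs_nonneg _) hp0
  set At : ℝ → ℝ≥0∞ := fun x₂ => ∫⁻ s in I, ENNReal.ofReal |(g (s, x₂)).1| with hAtdef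
  refine ⟨u (a, 0), ?_⟩
  have hmup : Measurable fun z : ℝ × ℝ => ENNReal.ofReal (|u z - u (a, 0)| ^ p) := by fun_prop
  have hptwise : ∀ᵐ x₂ ∂(volume.restrict I),
      (∫⁻ x₁ in I, ENNReal.ofReal (|u (x₁, x₂) - u (a, 0)| ^ p))
        ≤ (2:ℝ≥0∞) ^ p * (At x₂ ^ p + Bt ^ p) * R := by
    filter_upwards [ae_restrict_of_ae hhor, ae_restrict_mem hIm] with x₂ hx₂ hx₂I
    have hbound : ∀ x₁ ∈ I, ENNReal.ofReal (|u (x₁, x₂) - u (a, 0)| ^ p)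
        ≤ (2:ℝ≥0∞) ^ p * (At x₂ ^ p + Bt ^ p) := by
      intro x₁ hx₁
      have e1 : u (x₁, x₂) - u (a, x₂) = ∫ s in a..x₁, (g (s, x₂)).1 :=
        hx₂ hx₂I a (hIccsub haI) x₁ (hIccsub hx₁)
      have e2 : u (a, x₂) - u (a, 0) = ∫ s in (0:ℝ)..x₂, (g (a, s)).2 :=
        hFTCv 0 h0I x₂ (hIccsub hx₂I)
      have e3 : u (x₁, x₂) - u (a, 0)
          = (∫ s in a..x₁, (g (s, x₂)).1) + ∫ s in (0:ℝ)..x₂, (g (a, s)).2 := by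
        rw [← e1, ← e2]; ring
      have hb1 : ENNReal.ofReal |∫ s in a..x₁, (g (s, x₂)).1| ≤ At x₂ :=
        ofReal_intervalIntegral_le haI hx₁
      have hb2 : ENNReal.ofReal |∫ s in (0:ℝ)..x₂, (g (a, s)).2| ≤ Bt :=
        ofReal_intervalIntegral_le h0mem hx₂I
      calc ENNReal.ofReal (|u (x₁, x₂) - u (a, 0)| ^ p)
          = ENNReal.ofReal |u (x₁, x₂) - u (a, 0)| ^ p :=
            (ENNReal.ofReal_rpow_of_nonneg (abs_nonneg _) hp0).symm
        _ ≤ (At x₂ + Bt) ^ p := by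
            refine ENNReal.rpow_le_rpow ?_ hp0
            rw [e3]
            refine le_trans (ENNReal.ofReal_le_ofReal (abs_add_le _ _)) ?_
            exact le_trans ENNReal.ofReal_add_le (add_le_add hb1 hb2)
        _ ≤ (2:ℝ≥0∞) ^ p * (At x₂ ^ p + Bt ^ p) := by
            have hm : At x₂ + Bt ≤ 2 * max (At x₂) Bt := by
              rw [two_mul]
              exact add_le_add (le_max_left _ _) (le_max_right _ _)
            calc (At x₂ + Bt) ^ p ≤ (2 * max (At x₂) Bt) ^ p :=
                  ENNReal.rpow_le_rpow hm hp0
              _ = 2 ^ p * (max (At x₂) Bt) ^ p := ENNReal.mul_rpow_of_nonneg _ _ hp0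
              _ ≤ (2:ℝ≥0∞) ^ p * (At x₂ ^ p + Bt ^ p) := by
                  refine mul_le_mul_right ?_ _
                  rcases max_cases (At x₂) Bt with ⟨hmax, _⟩ | ⟨hmax, _⟩ <;> rw [hmax]
                  · exact le_add_right le_rfl
                  · exact le_add_left le_rfl
    calc ∫⁻ x₁ in I, ENNReal.ofReal (|u (x₁, x₂) - u (a, 0)| ^ p)
        ≤ ∫⁻ _x₁ in I, (2:ℝ≥0∞) ^ p * (At x₂ ^ p + Bt ^ p) :=
          setLIntegral_mono measurable_const hbound
      _ = (2:ℝ≥0∞) ^ p * (At x₂ ^ p + Bt ^ p) * R := by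
          rw [setLIntegral_const, hIvol]
  have hApint : ∫⁻ x₂ in I, At x₂ ^ p ≤ R ^ (p - 1) * I2 := by
    have hstep : ∀ x₂ : ℝ, At x₂ ^ p
        ≤ (∫⁻ s in I, ENNReal.ofReal (|(g (s, x₂)).1| ^ p)) * R ^ (p - 1) := by
      intro x₂
      have h := pow_lintegral_le hpq (volume.restrict I)
        (fun s => ENNReal.ofReal |(g (s, x₂)).1|) (by fun_prop)
      rw [Measure.restrict_apply_univ, hIvol] at h
      calc At x₂ ^ p ≤ (∫⁻ s in I, (ENNReal.ofReal |(g (s, x₂)).1|) ^ p) * R ^ (p - 1) := h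
        _ = _ := by
            congr 1
            exact lintegral_congr fun s =>
              ENNReal.ofReal_rpow_of_nonneg (abs_nonneg _) hp0
    calc ∫⁻ x₂ in I, At x₂ ^ p
        ≤ ∫⁻ x₂ in I, (∫⁻ s in I, ENNReal.ofReal (|(g (s, x₂)).1| ^ p)) * R ^ (p - 1) :=
          lintegral_mono fun x₂ => hstep x₂
      _ = (∫⁻ x₂ in I, ∫⁻ s in I, ENNReal.ofReal (|(g (s, x₂)).1| ^ p)) * R ^ (p - 1) :=
          lintegral_mul_const' _ _ (ENNReal.rpow_ne_top_of_nonneg (by linarith) hRt)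
      _ = (∫⁻ x in I ×ˢ I, ENNReal.ofReal (|(g x).1| ^ p)) * R ^ (p - 1) := by
          rw [lint_prod_eq_symm _ hmg1p]
      _ ≤ I2 * R ^ (p - 1) := by
          refine mul_le_mul_left ?_ _
          rw [hI2def]
          refine lintegral_mono fun x => ?_
          refine ENNReal.ofReal_le_ofReal (Real.rpow_le_rpow (abs_nonneg _) ?_ hp0)
          rw [← Real.norm_eq_abs]; exact norm_fst_le _
      _ = R ^ (p - 1) * I2 := mul_comm _ _
  have h2Rne : (2:ℝ≥0∞) ^ p * R ≠ ⊤ :=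
    ENNReal.mul_ne_top (ENNReal.rpow_ne_top_of_nonneg hp0 (by norm_num)) hRt
  have hRp : R ^ (p - 1) * R = R ^ p := by
    nth_rewrite 2 [← ENNReal.rpow_one R]
    rw [← ENNReal.rpow_add _ _ hR0 hRt]
    norm_num
  have hRKa : R * K a ≤ 4 * I2 := by
    rw [hR2]
    calc 2 * r * K a = 2 * (r * K a) := by ring
      _ ≤ 2 * (2 * I2) := mul_le_mul_right haK 2
      _ = 4 * I2 := by ring
  have hterm1 : (2:ℝ≥0∞) ^ p * R * (R ^ (p - 1) * I2) = (2:ℝ≥0∞) ^ p * R ^ p * I2 := by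
    calc (2:ℝ≥0∞) ^ p * R * (R ^ (p - 1) * I2)
        = (2:ℝ≥0∞) ^ p * (R ^ (p - 1) * R) * I2 := by ring
      _ = (2:ℝ≥0∞) ^ p * R ^ p * I2 := by rw [hRp]
  have hterm2 : ((2:ℝ≥0∞) ^ p * R * (K a * R ^ (p - 1))) * R
      ≤ (2:ℝ≥0∞) ^ p * R ^ p * (4 * I2) := by
    calc ((2:ℝ≥0∞) ^ p * R * (K a * R ^ (p - 1))) * R
        = (2:ℝ≥0∞) ^ p * (R ^ (p - 1) * R) * (R * K a) := by ring
      _ = (2:ℝ≥0∞) ^ p * R ^ p * (R * K a) := by rw [hRp]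
      _ ≤ (2:ℝ≥0∞) ^ p * R ^ p * (4 * I2) := mul_le_mul_right hRKa _
  have hRpval : R ^ p = (2:ℝ≥0∞) ^ p * r ^ p := by
    rw [hR2, ENNReal.mul_rpow_of_nonneg _ _ hp0]
  have hconst : (5:ℝ≥0∞) * ((2:ℝ≥0∞) ^ p * (2:ℝ≥0∞) ^ p) ≤ (36:ℝ≥0∞) ^ p := by
    have h4 : (2:ℝ≥0∞) ^ p * (2:ℝ≥0∞) ^ p = (4:ℝ≥0∞) ^ p := by
      rw [← ENNReal.mul_rpow_of_nonneg _ _ hp0]; norm_num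
    have h36 : (36:ℝ≥0∞) ^ p = (4:ℝ≥0∞) ^ p * (9:ℝ≥0∞) ^ p := by
      rw [← ENNReal.mul_rpow_of_nonneg _ _ hp0]; norm_num
    have h9 : (5:ℝ≥0∞) ≤ (9:ℝ≥0∞) ^ p := by
      calc (5:ℝ≥0∞) ≤ 9 := by norm_num
        _ = (9:ℝ≥0∞) ^ (1:ℝ) := (ENNReal.rpow_one _).symm
        _ ≤ (9:ℝ≥0∞) ^ p := ENNReal.rpow_le_rpow_of_exponent_le (by norm_num) hp.le
    rw [h4, h36]
    calc (5:ℝ≥0∞) * (4:ℝ≥0∞) ^ p ≤ (9:ℝ≥0∞) ^ p * (4:ℝ≥0∞) ^ p := mul_le_mul_left h9 _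
      _ = (4:ℝ≥0∞) ^ p * (9:ℝ≥0∞) ^ p := mul_comm _ _
  have hfinal : (2:ℝ≥0∞) ^ p * R ^ p * I2 + (2:ℝ≥0∞) ^ p * R ^ p * (4 * I2)
      ≤ ENNReal.ofReal ((36 * ρ) ^ p) * I2 := by
    have hlhs : (2:ℝ≥0∞) ^ p * R ^ p * I2 + (2:ℝ≥0∞) ^ p * R ^ p * (4 * I2)
        = (5:ℝ≥0∞) * ((2:ℝ≥0∞) ^ p * (2:ℝ≥0∞) ^ p) * (r ^ p * I2) := by
      rw [hRpval]; ring
    have hofReal36 : ENNReal.ofReal (36:ℝ) = (36:ℝ≥0∞) := by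
      norm_num
    have hrhs : ENNReal.ofReal ((36 * ρ) ^ p) * I2 = (36:ℝ≥0∞) ^ p * (r ^ p * I2) := by
      rw [← ENNReal.ofReal_rpow_of_nonneg (by linarith) hp0,
        ENNReal.ofReal_mul (by norm_num : (0:ℝ) ≤ 36), hofReal36,
        ENNReal.mul_rpow_of_nonneg _ _ hp0, hrdef]
      ring
    rw [hlhs, hrhs]
    exact mul_le_mul_left hconst _
  calc ∫⁻ x in I ×ˢ I, ENNReal.ofReal (|u x - u (a, 0)| ^ p)
      = ∫⁻ x₂ in I, ∫⁻ x₁ in I, ENNReal.ofReal (|u (x₁, x₂) - u (a, 0)| ^ p) :=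
        lint_prod_eq_symm _ hmup I I
    _ ≤ ∫⁻ x₂ in I, (2:ℝ≥0∞) ^ p * (At x₂ ^ p + Bt ^ p) * R := lintegral_mono_ae hptwise
    _ = ∫⁻ x₂ in I, ((2:ℝ≥0∞) ^ p * R * At x₂ ^ p + (2:ℝ≥0∞) ^ p * R * Bt ^ p) :=
        lintegral_congr fun x₂ => by ring
    _ = (2:ℝ≥0∞) ^ p * R * (∫⁻ x₂ in I, At x₂ ^ p) + ((2:ℝ≥0∞) ^ p * R * Bt ^ p) * R := by
        rw [lintegral_add_right _ measurable_const, lintegral_const_mul' _ _ h2Rne,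
          setLIntegral_const, hIvol]
    _ ≤ (2:ℝ≥0∞) ^ p * R * (R ^ (p - 1) * I2) + ((2:ℝ≥0∞) ^ p * R * (K a * R ^ (p - 1))) * R := by
        exact add_le_add (mul_le_mul_right hApint _)
          (mul_le_mul_left (mul_le_mul_right hBt _) R)
    _ ≤ (2:ℝ≥0∞) ^ p * R ^ p * I2 + (2:ℝ≥0∞) ^ p * R ^ p * (4 * I2) := by
        rw [hterm1]; exact add_le_add_right hterm2 _
    _ ≤ ENNReal.ofReal ((36 * ρ) ^ p) * I2 := hfinal
end

section
/- (Unboundedness example) Let $p\in(1,\infty)$, $\alpha\in(p/(p+1),1)$, $\theta_k\to0^+$, and define $u_k:(0,1)^2\to\mathbb{R}$ by $u_k(x_1,x_2)=\frac{1}{\theta_k}x_2+(1-\frac{1}{\theta_k})(1-\theta_k^\alpha x_1)$ if $x_2\ge 1-\theta_k^\alpha x_1$ and $u_k(x_1,x_2)=x_2$ otherwise. Then $\|\partial_2 u_k\|_{L^1((0,1)^2)}\to\infty$ as $k\to\infty$. -/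
open MeasureTheory Set Filter
open scoped ENNReal Topology

lemma deriv_piece (t c y : ℝ) (hy : y ≠ c) :
    deriv (fun z : ℝ => if z ≥ c then (1 / t) * z + (1 - 1 / t) * c else z) y
      = if c < y then 1 / t else 1 := by
  rcases hy.lt_or_gt with h | h
  · have hev : (fun z : ℝ => if z ≥ c then (1 / t) * z + (1 - 1 / t) * c else z)
        =ᶠ[nhds y] (fun z => z) := by
      filter_upwards [Iio_mem_nhds h] with z hz
      have : ¬ (z ≥ c) := not_le.mpr hz
      simp [this]
    rw [hev.deriv_eq, deriv_id'']
    simp [not_lt.mpr h.le, if_neg (not_lt.mpr h.le)]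
  · have hev : (fun z : ℝ => if z ≥ c then (1 / t) * z + (1 - 1 / t) * c else z)
        =ᶠ[nhds y] (fun z => (1 / t) * z + (1 - 1 / t) * c) := by
      filter_upwards [Ioi_mem_nhds h] with z hz
      simp [le_of_lt (Set.mem_Ioi.mp hz)]
    rw [hev.deriv_eq]
    have : HasDerivAt (fun z : ℝ => (1 / t) * z + (1 - 1 / t) * c) ((1 / t) * 1) y :=
      ((hasDerivAt_id y).const_mul (1 / t)).add_const _
    rw [this.deriv]
    simp [h]

lemma integral_piece (α t : ℝ) (ht0 : 0 < t) (ht1 : t < 1) (hα0 : 0 < α) :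
    ∫ x in (Set.Ioo (0:ℝ) 1 ×ˢ Set.Ioo (0:ℝ) 1),
      |deriv (fun y : ℝ =>
            if y ≥ 1 - t ^ α * x.1 then
              (1 / t) * y + (1 - 1 / t) * (1 - t ^ α * x.1)
            else y) x.2|
      = 1 + (1 / t - 1) * (t ^ α / 2) := by
  set a := t ^ α with ha
  have ha0 : 0 < a := Real.rpow_pos_of_pos ht0 α
  have ha1 : a < 1 := Real.rpow_lt_one ht0.le ht1 hα0
  set S : Set (ℝ × ℝ) := Set.Ioo (0:ℝ) 1 ×ˢ Set.Ioo (0:ℝ) 1 with hSdef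
  have hS : MeasurableSet S := measurableSet_Ioo.prod measurableSet_Ioo
  set L : Set (ℝ × ℝ) := {x | x.2 = 1 - a * x.1} with hLdef
  have hLclosed : IsClosed L :=
    isClosed_eq continuous_snd (continuous_const.sub (continuous_const.mul continuous_fst))
  have hL : volume L = 0 := by
    rw [MeasureTheory.Measure.volume_eq_prod, Measure.measure_prod_null hLclosed.measurableSet]
    refine ae_of_all _ fun x => ?_
    have hpre : Prod.mk x ⁻¹' L = {1 - a * x} := by ext y; simp [hLdef]
    simp [hpre]
  set T : Set (ℝ × ℝ) := {x | 1 - a * x.1 < x.2} with hTdef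
  have hT : MeasurableSet T :=
    measurableSet_lt (measurable_const.sub (measurable_const.mul measurable_fst)) measurable_snd
  have hvolS : volume S = 1 := by
    rw [hSdef, MeasureTheory.Measure.volume_eq_prod, Measure.prod_prod, Real.volume_Ioo]
    simp
  have hcong : (∫ x in S, |deriv (fun y : ℝ =>
            if y ≥ 1 - t ^ α * x.1 then
              (1 / t) * y + (1 - 1 / t) * (1 - t ^ α * x.1)
            else y) x.2|)
        = ∫ x in S, (1 + T.indicator (fun _ => 1 / t - 1) x) := by
    refine setIntegral_congr_ae hS ?_
    have h0 : ∀ᵐ x : ℝ × ℝ, x ∉ L := compl_mem_ae_iff.mpr hL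
    filter_upwards [h0] with x hx _
    rw [← ha, deriv_piece t (1 - a * x.1) x.2 (fun he => hx he)]
    by_cases hc : 1 - a * x.1 < x.2
    · rw [if_pos hc, Set.indicator_of_mem (show x ∈ T from hc),
        abs_of_pos (by positivity : (0:ℝ) < 1 / t)]
      ring
    · rw [if_neg hc, Set.indicator_of_notMem (show x ∉ T from hc), abs_one]
      ring
  rw [hcong]
  have h1int : IntegrableOn (fun _ : ℝ × ℝ => (1:ℝ)) S := by
    exact integrableOn_const (by rw [hvolS]; exact ENNReal.one_ne_top)
  have h2int : IntegrableOn (T.indicator fun _ => (1 / t - 1)) S := by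
    refine Integrable.indicator ?_ hT
    exact integrableOn_const (by rw [hvolS]; exact ENNReal.one_ne_top)
  have hST : volume (S ∩ T) = ENNReal.ofReal (a / 2) := by
    have hreg : S ∩ T = regionBetween (fun x1 => 1 - a * x1) (fun _ => 1) (Set.Ioo 0 1) := by
      ext x
      simp only [hSdef, hTdef, regionBetween, Set.mem_inter_iff, Set.mem_prod, Set.mem_Ioo,
        Set.mem_setOf_eq]
      constructor
      · rintro ⟨⟨h1, h2⟩, h3⟩; exact ⟨h1, h3, h2.2⟩
      · rintro ⟨h1, h2, h3⟩
        have hax : a * x.1 < 1 := by nlinarith [h1.1, h1.2]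
        exact ⟨⟨h1, by linarith, h3⟩, h2⟩
    have fint : IntegrableOn (fun x1 : ℝ => 1 - a * x1) (Set.Ioo 0 1) :=
      ((continuous_const.sub (continuous_const.mul continuous_id)).integrableOn_Icc).mono_set
        Set.Ioo_subset_Icc_self
    have gint : IntegrableOn (fun _ : ℝ => (1:ℝ)) (Set.Ioo 0 1) :=
      (continuous_const.integrableOn_Icc).mono_set Set.Ioo_subset_Icc_self
    rw [hreg, MeasureTheory.Measure.volume_eq_prod,
      volume_regionBetween_eq_integral fint gint measurableSet_Ioo
        (fun x hx => by show (1:ℝ) - a * x ≤ 1; nlinarith [hx.1])]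
    congr 1
    have heq2 : ∫ y in Set.Ioo (0:ℝ) 1, (((fun _ : ℝ => (1:ℝ)) - fun x1 : ℝ => 1 - a * x1) y)
        = ∫ y in Set.Ioo (0:ℝ) 1, a * y := by
      apply setIntegral_congr_fun measurableSet_Ioo
      intro y _; simp only [Pi.sub_apply]; ring
    rw [heq2, ← MeasureTheory.integral_Ioc_eq_integral_Ioo,
      ← intervalIntegral.integral_of_le (by norm_num : (0:ℝ) ≤ 1)]
    rw [intervalIntegral.integral_const_mul, integral_id]
    norm_num [mul_one_div]
  rw [integral_add h1int h2int, setIntegral_const, setIntegral_indicator hT, setIntegral_const,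
    measureReal_def, measureReal_def, hvolS, hST, ENNReal.toReal_ofReal (by positivity : (0:ℝ) ≤ a / 2)]
  simp only [ENNReal.toReal_one, smul_eq_mul]
  ring


/-- Unboundedness example: for `p ∈ (1,∞)`, `α ∈ (p/(p+1), 1)`,
`θ_k → 0⁺`, and `u_k(x₁,x₂) = x₂/θ_k + (1 - 1/θ_k)(1 - θ_k^α x₁)` above the line
`x₂ = 1 - θ_k^α x₁` and `u_k(x₁,x₂) = x₂` below, the vertical derivatives blow up in
`L¹`: `‖∂₂u_k‖_{L¹((0,1)²)} → ∞`. -/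
theorem stmt9 (p α : ℝ) (hp : 1 < p) (hα : α ∈ Set.Ioo (p / (p + 1)) 1)
    (θ : ℕ → ℝ) (hθpos : ∀ k, 0 < θ k)
    (hθlim : Tendsto θ atTop (nhds 0)) :
    Tendsto (fun k =>
        ∫ x in (Set.Ioo (0:ℝ) 1 ×ˢ Set.Ioo (0:ℝ) 1),
          |deriv (fun y : ℝ =>
            if y ≥ 1 - (θ k) ^ α * x.1 then
              (1 / θ k) * y + (1 - 1 / θ k) * (1 - (θ k) ^ α * x.1)
            else y) x.2|)
      atTop atTop := by
  obtain ⟨hα0', hα1⟩ := hα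
  have hp0 : 0 < p / (p + 1) := by positivity
  have hα0 : 0 < α := lt_trans hp0 hα0'
  have hev1 : ∀ᶠ k in atTop, θ k < 1 := hθlim.eventually_lt_const one_pos
  have h1 : Tendsto θ atTop (nhdsWithin 0 (Set.Ioi 0)) :=
    tendsto_nhdsWithin_of_tendsto_nhds_of_eventually_within _ hθlim
      (Eventually.of_forall fun k => hθpos k)
  have h2 : Tendsto (fun k => (θ k)⁻¹) atTop atTop := tendsto_inv_nhdsGT_zero.comp h1
  have h3 : Tendsto (fun k => ((θ k)⁻¹) ^ (1 - α)) atTop atTop :=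
    (tendsto_rpow_atTop (by linarith)).comp h2
  have h4 : Tendsto (fun k => ((θ k)⁻¹) ^ (1 - α) / 2) atTop atTop :=
    h3.atTop_div_const two_pos
  refine tendsto_atTop_mono' atTop ?_ h4
  filter_upwards [hev1] with k hk1
  rw [integral_piece α (θ k) (hθpos k) hk1 hα0]
  set t := θ k with htdef
  have ht0 : 0 < t := hθpos k
  have hinv : (t⁻¹) ^ (1 - α) = (1 / t) * t ^ α := by
    calc (t⁻¹) ^ (1 - α) = (t ^ (1 - α))⁻¹ := Real.inv_rpow ht0.le _
      _ = t ^ (-(1 - α)) := (Real.rpow_neg ht0.le _).symm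
      _ = t ^ (α + (-1)) := by congr 1; ring
      _ = t ^ α * t ^ (-1 : ℝ) := Real.rpow_add ht0 _ _
      _ = (1 / t) * t ^ α := by rw [Real.rpow_neg_one, one_div]; ring
  have htα : t ^ α ≤ 1 := Real.rpow_le_one ht0.le hk1.le hα0.le
  rw [hinv]
  nlinarith [htα]
end

section
/- (Energy bound for the unboundedness example) With $u_k$ as in the unboundedness example ($\alpha\in(p/(p+1),1)$), the rescaled energies are uniformly bounded: $E_{\theta_k}(u_k)=\int_{(0,1)^2}|\partial_1 u_k|^p+\min\{|\partial_2 u_k|^p,|\partial_2 u_k-1/\theta_k|^p\}\,dx+\sigma\theta_k|D^2u_k|((0,1)^2)\le C$ for a constant $C$ independent of $k$. -/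
open MeasureTheory Set Filter
open scoped ENNReal Topology

lemma line_null (a : ℝ) : volume {x : ℝ × ℝ | x.2 = 1 - a * x.1} = 0 := by
  have hm : MeasurableSet {x : ℝ × ℝ | x.2 = 1 - a * x.1} :=
    measurableSet_eq_fun (by fun_prop) (by fun_prop)
  rw [Measure.volume_eq_prod, Measure.prod_apply hm]
  have h0 : ∀ x : ℝ, volume (Prod.mk x ⁻¹' {x : ℝ × ℝ | x.2 = 1 - a * x.1}) = 0 := by
    intro x
    have : Prod.mk x ⁻¹' {x : ℝ × ℝ | x.2 = 1 - a * x.1} = {1 - a * x} := by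
      ext y; simp [Set.mem_preimage]
    rw [this]; exact measure_singleton _
  simp [h0]

lemma key (p α σ t : ℝ) (hp : 1 < p) (hα1 : p / (p + 1) < α) (hα2 : α < 1)
    (hσ : 0 < σ) (ht : 0 < t) (ht2 : t ≤ 1/2) :
    (∫ x in (Set.Ioo (0:ℝ) 1 ×ˢ Set.Ioo (0:ℝ) 1),
        (|deriv (fun s : ℝ =>
            if x.2 ≥ 1 - t ^ α * s then
              (1 / t) * x.2 + (1 - 1 / t) * (1 - t ^ α * s)
            else x.2) x.1| ^ p
        + min
            (|deriv (fun y : ℝ =>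
              if y ≥ 1 - t ^ α * x.1 then
                (1 / t) * y + (1 - 1 / t) * (1 - t ^ α * x.1)
              else y) x.2| ^ p)
            (|deriv (fun y : ℝ =>
              if y ≥ 1 - t ^ α * x.1 then
                (1 / t) * y + (1 - 1 / t) * (1 - t ^ α * x.1)
              else y) x.2 - 1 / t| ^ p)))
      + σ * t *
          (Real.sqrt (((1 / t - 1) * t ^ α) ^ 2 + (1 / t - 1) ^ 2) *
            Real.sqrt (1 + t ^ (2 * α)))
      ≤ 2 + 4 * σ := by
  have hp0 : (0:ℝ) < p := lt_trans one_pos hp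
  have ht1 : t ≤ 1 := ht2.trans (by norm_num)
  have hα0 : 0 < α := lt_trans (by positivity) hα1
  have ha : 0 < t ^ α := Real.rpow_pos_of_pos ht α
  have ha1 : t ^ α ≤ 1 := Real.rpow_le_one ht.le ht1 hα0.le
  set c : ℝ := (t ^ (α - 1)) ^ p with hc_def
  have hc : 0 ≤ c := Real.rpow_nonneg (Real.rpow_nonneg ht.le _) p
  set sq : Set (ℝ × ℝ) := Set.Ioo (0:ℝ) 1 ×ˢ Set.Ioo (0:ℝ) 1 with hsq_def
  have hsqm : MeasurableSet sq := measurableSet_Ioo.prod measurableSet_Ioo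
  set S : Set (ℝ × ℝ) := Set.Ioo (0:ℝ) 1 ×ˢ Set.Ioo (1 - t ^ α) 1 with hS_def
  have hSm : MeasurableSet S := measurableSet_Ioo.prod measurableSet_Ioo
  set g : ℝ × ℝ → ℝ := fun x => 1 + S.indicator (fun _ => c) x with hg_def
  -- volumes
  have hvolS : volume S = ENNReal.ofReal (t ^ α) := by
    rw [hS_def, Measure.volume_eq_prod, Measure.prod_prod, Real.volume_Ioo, Real.volume_Ioo]
    norm_num
  have hvolsq : volume sq = 1 := by
    rw [hsq_def, Measure.volume_eq_prod, Measure.prod_prod, Real.volume_Ioo]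
    norm_num
  have hμS_le : (volume.restrict sq) S ≤ ENNReal.ofReal (t ^ α) := by
    rw [Measure.restrict_apply hSm, ← hvolS]
    exact measure_mono (Set.inter_subset_left)
  -- integrability of g
  have hIndInt : Integrable (S.indicator fun _ => c) (volume.restrict sq) := by
    rw [integrable_indicator_iff hSm]
    exact integrableOn_const (lt_of_le_of_lt hμS_le ENNReal.ofReal_lt_top).ne
  have hgInt : Integrable g (volume.restrict sq) := by
    have : IsFiniteMeasure (volume.restrict sq) := by
      constructor
      rw [Measure.restrict_apply_univ, hvolsq]; exact ENNReal.one_lt_top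
    exact (integrable_const (1:ℝ)).add hIndInt
  -- integral of g
  have hintg : ∫ x in sq, g x ≤ 2 := by
    have h1 : ∫ x in sq, (1:ℝ) = 1 := by
      rw [setIntegral_const, measureReal_def, hvolsq]; simp
    have h2 : ∫ x in sq, S.indicator (fun _ => c) x ≤ t ^ α * c := by
      rw [integral_indicator hSm, setIntegral_const]
      have := ENNReal.toReal_mono (ENNReal.ofReal_ne_top) hμS_le
      rw [ENNReal.toReal_ofReal ha.le] at this
      rw [smul_eq_mul]
      exact mul_le_mul_of_nonneg_right this hc
    have h3 : t ^ α * c ≤ 1 := by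
      rw [hc_def, ← Real.rpow_mul ht.le, ← Real.rpow_add ht]
      refine Real.rpow_le_one ht.le ht1 ?_
      have hpp : 0 < p + 1 := by linarith
      rw [div_lt_iff₀ hpp] at hα1
      nlinarith
    have : ∫ x in sq, g x = (∫ x in sq, (1:ℝ)) + ∫ x in sq, S.indicator (fun _ => c) x := by
      have hfin : IsFiniteMeasure (volume.restrict sq) := by
        constructor; rw [Measure.restrict_apply_univ, hvolsq]; exact ENNReal.one_lt_top
      exact integral_add (integrable_const 1) hIndInt
    rw [this, h1]; linarith
  -- pointwise a.e. bound
  have hae : ∀ᵐ x ∂(volume.restrict sq), x.2 ≠ 1 - t ^ α * x.1 := by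
    refine ae_restrict_of_ae ?_
    rw [ae_iff]
    simpa [not_not] using line_null (t ^ α)
  have hmem : ∀ᵐ x ∂(volume.restrict sq), x ∈ sq := ae_restrict_mem hsqm
  set F : ℝ × ℝ → ℝ := fun x =>
        (|deriv (fun s : ℝ =>
            if x.2 ≥ 1 - t ^ α * s then
              (1 / t) * x.2 + (1 - 1 / t) * (1 - t ^ α * s)
            else x.2) x.1| ^ p
        + min
            (|deriv (fun y : ℝ =>
              if y ≥ 1 - t ^ α * x.1 then
                (1 / t) * y + (1 - 1 / t) * (1 - t ^ α * x.1)
              else y) x.2| ^ p)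
            (|deriv (fun y : ℝ =>
              if y ≥ 1 - t ^ α * x.1 then
                (1 / t) * y + (1 - 1 / t) * (1 - t ^ α * x.1)
              else y) x.2 - 1 / t| ^ p)) with hF_def
  have hFnn : 0 ≤ᵐ[volume.restrict sq] F := by
    refine Filter.Eventually.of_forall fun x => ?_
    exact add_nonneg (Real.rpow_nonneg (abs_nonneg _) p)
      (le_min (Real.rpow_nonneg (abs_nonneg _) p) (Real.rpow_nonneg (abs_nonneg _) p))
  have hFle : F ≤ᵐ[volume.restrict sq] g := by
    filter_upwards [hae, hmem] with x hx hxsq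
    rcases lt_or_gt_of_ne (Ne.symm hx) with hgt | hlt
    · -- above the line: 1 - t^α x₁ < x₂
      have hd1 : deriv (fun s : ℝ =>
            if x.2 ≥ 1 - t ^ α * s then
              (1 / t) * x.2 + (1 - 1 / t) * (1 - t ^ α * s)
            else x.2) x.1 = (1 - 1 / t) * (-(t ^ α)) := by
        have hev : (fun s : ℝ =>
            if x.2 ≥ 1 - t ^ α * s then
              (1 / t) * x.2 + (1 - 1 / t) * (1 - t ^ α * s)
            else x.2) =ᶠ[𝓝 x.1]
            (fun s : ℝ => (1 / t) * x.2 + (1 - 1 / t) * (1 - t ^ α * s)) := by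
          have hcont : ∀ᶠ s in 𝓝 x.1, 1 - t ^ α * s < x.2 :=
            ContinuousAt.eventually_lt (by fun_prop) continuousAt_const hgt
          filter_upwards [hcont] with s hs
          rw [if_pos hs.le]
        rw [hev.deriv_eq]
        have hda : HasDerivAt (fun s : ℝ => 1 - t ^ α * s) (-(t ^ α)) x.1 := by
          simpa using ((hasDerivAt_id x.1).const_mul (t ^ α)).const_sub 1
        exact ((hda.const_mul (1 - 1 / t)).const_add ((1 / t) * x.2)).deriv
      have hd2 : deriv (fun y : ℝ =>
              if y ≥ 1 - t ^ α * x.1 then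
                (1 / t) * y + (1 - 1 / t) * (1 - t ^ α * x.1)
              else y) x.2 = 1 / t := by
        have hev : (fun y : ℝ =>
              if y ≥ 1 - t ^ α * x.1 then
                (1 / t) * y + (1 - 1 / t) * (1 - t ^ α * x.1)
              else y) =ᶠ[𝓝 x.2]
              (fun y : ℝ => (1 / t) * y + (1 - 1 / t) * (1 - t ^ α * x.1)) := by
          filter_upwards [eventually_gt_nhds hgt] with y hy
          rw [if_pos hy.le]
        rw [hev.deriv_eq]
        have : HasDerivAt (fun y : ℝ => (1 / t) * y + (1 - 1 / t) * (1 - t ^ α * x.1))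
            (1 / t) x.2 := by
          simpa using ((hasDerivAt_id x.2).const_mul (1 / t)).add_const
            ((1 - 1 / t) * (1 - t ^ α * x.1))
        exact this.deriv
      have hterm1 : |(1 - 1 / t) * (-(t ^ α))| ^ p ≤ c := by
        have h1t : (1:ℝ) ≤ 1 / t := by
          rw [le_div_iff₀ ht]; linarith
        have habs : |(1 - 1 / t) * (-(t ^ α))| = (1 / t - 1) * t ^ α := by
          rw [abs_mul, abs_neg, abs_of_nonneg ha.le, abs_of_nonpos (by linarith)]
          ring
        have hle : (1 / t - 1) * t ^ α ≤ t ^ (α - 1) := by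
          calc (1 / t - 1) * t ^ α ≤ (1 / t) * t ^ α :=
                mul_le_mul_of_nonneg_right (by linarith) ha.le
            _ = t ^ (α - 1) := by
                rw [Real.rpow_sub ht, Real.rpow_one]; ring
        rw [habs, hc_def]
        exact Real.rpow_le_rpow (mul_le_mul_of_nonneg_right (by linarith : (0:ℝ) ≤ 1 / t - 1) ha.le |> le_trans (by simp)) hle hp0.le
      have hxS : x ∈ S := by
        refine ⟨hxsq.1, ?_, hxsq.2.2⟩
        have : t ^ α * x.1 ≤ t ^ α := by
          nlinarith [hxsq.1.2, ha]
        linarith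
      have hgx : g x = 1 + c := by
        rw [hg_def]; simp [Set.indicator_of_mem hxS]
      rw [hF_def]
      simp only [hd1, hd2]
      have hmin : min (|1 / t| ^ p) (|1 / t - 1 / t| ^ p) = 0 := by
        have : |1 / t - 1 / t| ^ p = 0 := by
          simp [Real.zero_rpow (ne_of_gt hp0)]
        rw [min_eq_right]
        · exact this
        · rw [this]; exact Real.rpow_nonneg (abs_nonneg _) p
      rw [hmin, hgx]
      linarith
    · -- below the line: x₂ < 1 - t^α x₁
      have hd1 : deriv (fun s : ℝ =>
            if x.2 ≥ 1 - t ^ α * s then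
              (1 / t) * x.2 + (1 - 1 / t) * (1 - t ^ α * s)
            else x.2) x.1 = 0 := by
        have hev : (fun s : ℝ =>
            if x.2 ≥ 1 - t ^ α * s then
              (1 / t) * x.2 + (1 - 1 / t) * (1 - t ^ α * s)
            else x.2) =ᶠ[𝓝 x.1] (fun _ : ℝ => x.2) := by
          have hcont : ∀ᶠ s in 𝓝 x.1, x.2 < 1 - t ^ α * s :=
            ContinuousAt.eventually_lt continuousAt_const (by fun_prop) hlt
          filter_upwards [hcont] with s hs
          rw [if_neg (not_le.mpr hs)]
        rw [hev.deriv_eq, deriv_const]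
      have hd2 : deriv (fun y : ℝ =>
              if y ≥ 1 - t ^ α * x.1 then
                (1 / t) * y + (1 - 1 / t) * (1 - t ^ α * x.1)
              else y) x.2 = 1 := by
        have hev : (fun y : ℝ =>
              if y ≥ 1 - t ^ α * x.1 then
                (1 / t) * y + (1 - 1 / t) * (1 - t ^ α * x.1)
              else y) =ᶠ[𝓝 x.2] (fun y : ℝ => y) := by
          filter_upwards [eventually_lt_nhds hlt] with y hy
          rw [if_neg (not_le.mpr hy)]
        rw [hev.deriv_eq, deriv_id'']
      rw [hF_def]
      simp only [hd1, hd2]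
      have h0 : |(0:ℝ)| ^ p = 0 := by simp [Real.zero_rpow (ne_of_gt hp0)]
      have hmin : min (|(1:ℝ)| ^ p) (|1 - 1 / t| ^ p) ≤ 1 := by
        refine le_trans (min_le_left _ _) ?_
        simp
      have hgge : 1 ≤ g x := by
        have hind : 0 ≤ S.indicator (fun _ : ℝ × ℝ => c) x :=
          Set.indicator_nonneg (fun _ _ => hc) x
        rw [hg_def]
        simp only
        linarith
      rw [h0, zero_add]
      exact le_trans hmin hgge
  -- combine
  have hmain : ∫ x in sq, F x ≤ 2 :=
    le_trans (integral_mono_of_nonneg hFnn hgInt hFle) hintg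
  have hsig : σ * t *
      (Real.sqrt (((1 / t - 1) * t ^ α) ^ 2 + (1 / t - 1) ^ 2) *
        Real.sqrt (1 + t ^ (2 * α))) ≤ 4 * σ := by
    have h1t : (1:ℝ) ≤ 1 / t := by rw [le_div_iff₀ ht]; linarith
    have hb : 0 ≤ 1 / t - 1 := by linarith
    have hs1 : Real.sqrt (((1 / t - 1) * t ^ α) ^ 2 + (1 / t - 1) ^ 2) ≤ 2 / t := by
      have hle : ((1 / t - 1) * t ^ α) ^ 2 + (1 / t - 1) ^ 2 ≤ (2 / t) ^ 2 := by
        have h1 : (1 / t - 1) * t ^ α ≤ 1 / t := by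
          nlinarith
        have h2 : 0 ≤ (1 / t - 1) * t ^ α := mul_nonneg hb ha.le
        have h3 : 1 / t - 1 ≤ 1 / t := by linarith
        have e1 : ((1 / t - 1) * t ^ α) ^ 2 ≤ (1 / t) ^ 2 := pow_le_pow_left₀ h2 h1 2
        have e2 : (1 / t - 1) ^ 2 ≤ (1 / t) ^ 2 := pow_le_pow_left₀ hb h3 2
        have e3 : (2 / t) ^ 2 = 4 * (1 / t) ^ 2 := by ring
        have e4 : (0:ℝ) ≤ (1 / t) ^ 2 := sq_nonneg _
        linarith
      calc Real.sqrt (((1 / t - 1) * t ^ α) ^ 2 + (1 / t - 1) ^ 2)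
          ≤ Real.sqrt ((2 / t) ^ 2) := Real.sqrt_le_sqrt hle
        _ = 2 / t := Real.sqrt_sq (by positivity)
    have hs2 : Real.sqrt (1 + t ^ (2 * α)) ≤ 2 := by
      have : t ^ (2 * α) ≤ 1 := Real.rpow_le_one ht.le ht1 (by positivity)
      calc Real.sqrt (1 + t ^ (2 * α)) ≤ Real.sqrt 4 := Real.sqrt_le_sqrt (by linarith)
        _ = 2 := by
          rw [show (4:ℝ) = 2 ^ 2 by norm_num, Real.sqrt_sq (by norm_num)]
    have hnn1 : 0 ≤ Real.sqrt (((1 / t - 1) * t ^ α) ^ 2 + (1 / t - 1) ^ 2) :=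
      Real.sqrt_nonneg _
    have hnn2 : 0 ≤ Real.sqrt (1 + t ^ (2 * α)) := Real.sqrt_nonneg _
    have hprod : Real.sqrt (((1 / t - 1) * t ^ α) ^ 2 + (1 / t - 1) ^ 2) *
        Real.sqrt (1 + t ^ (2 * α)) ≤ (2 / t) * 2 :=
      mul_le_mul hs1 hs2 hnn2 (by positivity)
    calc σ * t * (Real.sqrt (((1 / t - 1) * t ^ α) ^ 2 + (1 / t - 1) ^ 2) *
          Real.sqrt (1 + t ^ (2 * α)))
        ≤ σ * t * ((2 / t) * 2) := by
          exact mul_le_mul_of_nonneg_left hprod (by positivity)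
      _ = 4 * σ := by field_simp; ring
  linarith [hmain, hsig]

/-- Energy bound for the unboundedness example: with
`u_k(x₁,x₂) = x₂/θ_k + (1 - 1/θ_k)(1 - θ_k^α x₁)` above the line `x₂ = 1 - θ_k^α x₁`
and `u_k = x₂` below (`α ∈ (p/(p+1),1)`, `σ > 0`), the rescaled energies
`E_{θ_k}(u_k) = ∫ |∂₁u_k|^p + min{|∂₂u_k|^p, |∂₂u_k - 1/θ_k|^p} + σθ_k|D²u_k|((0,1)²)`
are bounded uniformly in `k`. Here `|D²u_k|((0,1)²)` is computed explicitly: `D²u_k` is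
concentrated on the line segment of length `√(1+θ_k^{2α})`, with gradient jump
`((1/θ_k - 1)θ_k^α, 1/θ_k - 1)` across it. -/
theorem stmt10 (p α σ : ℝ) (hp : 1 < p) (hα : α ∈ Set.Ioo (p / (p + 1)) 1)
    (hσ : 0 < σ) (θ : ℕ → ℝ) (hθpos : ∀ k, 0 < θ k) (hθle : ∀ k, θ k ≤ 1/2)
    (hθlim : Tendsto θ atTop (nhds 0)) :
    ∃ C : ℝ, ∀ k,
      (∫ x in (Set.Ioo (0:ℝ) 1 ×ˢ Set.Ioo (0:ℝ) 1),
        (|deriv (fun t : ℝ =>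
            if x.2 ≥ 1 - (θ k) ^ α * t then
              (1 / θ k) * x.2 + (1 - 1 / θ k) * (1 - (θ k) ^ α * t)
            else x.2) x.1| ^ p
        + min
            (|deriv (fun y : ℝ =>
              if y ≥ 1 - (θ k) ^ α * x.1 then
                (1 / θ k) * y + (1 - 1 / θ k) * (1 - (θ k) ^ α * x.1)
              else y) x.2| ^ p)
            (|deriv (fun y : ℝ =>
              if y ≥ 1 - (θ k) ^ α * x.1 then
                (1 / θ k) * y + (1 - 1 / θ k) * (1 - (θ k) ^ α * x.1)
              else y) x.2 - 1 / θ k| ^ p)))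
      + σ * θ k *
          (Real.sqrt (((1 / θ k - 1) * (θ k) ^ α) ^ 2 + (1 / θ k - 1) ^ 2) *
            Real.sqrt (1 + (θ k) ^ (2 * α)))
      ≤ C := by
  exact ⟨2 + 4 * σ, fun k => key p α σ (θ k) hp hα.1 hα.2 hσ (hθpos k) (hθle k)⟩
end
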